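/- For every k ∈ SO(n-1) and every x ∈ ℝ^{n-1}, if m denotes the block-diagonal matrix diag(1, k, 1) ∈ GL(n+1, ℝ), then m · u(x) · m⁻¹ = u(k·x), where k·x denotes the standard action of SO(n-1) on ℝ^{n-1}. -/

import Mathlib

open scoped Matrix

noncomputable def uMat (n : ℕ) (x : Fin (n - 1) → ℝ) :
    Matrix (Fin (n + 1)) (Fin (n + 1)) ℝ :=
  Matrix.of fun i j =>
    if i = j then 1
    else if i.val = 0 then
      (if j.val = n then ∑ l, x l ^ 2
       else if h : 1 ≤ j.val ∧ j.val - 1 < n - 1 then x ⟨j.val - 1, h.2⟩ else 0)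
    else if j.val = n then
      (if h : 1 ≤ i.val ∧ i.val - 1 < n - 1 then 2 * x ⟨i.val - 1, h.2⟩ else 0)
    else 0

noncomputable def uMinusMat (n : ℕ) (x : Fin (n - 1) → ℝ) :
    Matrix (Fin (n + 1)) (Fin (n + 1)) ℝ :=
  Matrix.of fun i j =>
    if i = j then 1
    else if j.val = 0 then
      (if i.val = n then ∑ l, x l ^ 2
       else if h : 1 ≤ i.val ∧ i.val - 1 < n - 1 then 2 * x ⟨i.val - 1, h.2⟩ else 0)
    else if i.val = n then
      (if h : 1 ≤ j.val ∧ j.val - 1 < n - 1 then x ⟨j.val - 1, h.2⟩ else 0)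
    else 0

noncomputable def bMat (n : ℕ) (t : ℝ) : Matrix (Fin (n + 1)) (Fin (n + 1)) ℝ :=
  Matrix.diagonal fun i : Fin (n + 1) =>
    if i.val = 0 then Real.exp (2 * t)
    else if i.val = n then Real.exp (-(2 * t)) else 1

noncomputable def Qform (n : ℕ) (v : Fin (n + 1) → ℝ) : ℝ :=
  2 * v ⟨0, by omega⟩ * v ⟨n, by omega⟩ -
    ∑ j : Fin (n - 1), v ⟨j.val + 1, by have := j.isLt; omega⟩ ^ 2

noncomputable def mMat (n : ℕ) (k : Matrix (Fin (n - 1)) (Fin (n - 1)) ℝ) :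
    Matrix (Fin (n + 1)) (Fin (n + 1)) ℝ :=
  Matrix.of fun i j =>
    if i.val = 0 ∧ j.val = 0 then 1
    else if i.val = n ∧ j.val = n then 1
    else if h : 1 ≤ i.val ∧ i.val - 1 < n - 1 ∧ 1 ≤ j.val ∧ j.val - 1 < n - 1 then
      k ⟨i.val - 1, h.2.1⟩ ⟨j.val - 1, h.2.2.2⟩
    else 0


lemma sum_mid {n : ℕ} (hn : 2 ≤ n) (g : Fin (n+1) → ℝ)
    (h0 : g ⟨0, by omega⟩ = 0) (hl : g ⟨n, by omega⟩ = 0) :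
    ∑ l, g l = ∑ b : Fin (n-1), g ⟨b.val + 1, by omega⟩ := by
  classical
  set e : Fin (n-1) → Fin (n+1) := fun b => ⟨b.val + 1, by omega⟩ with he
  have hinj : Function.Injective e := by
    intro a b hab
    simp only [he, Fin.mk.injEq] at hab
    exact Fin.ext (by omega)
  rw [show (∑ b : Fin (n-1), g ⟨b.val + 1, by omega⟩) = ∑ l ∈ Finset.image e Finset.univ, g l from
    (Finset.sum_image (fun a _ b _ h => hinj h)).symm]
  refine (Finset.sum_subset (Finset.subset_univ _) ?_).symm
  intro l _ hl'
  rcases Nat.lt_or_ge l.val 1 with h | h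
  · have : l = (⟨0, by omega⟩ : Fin (n+1)) := Fin.ext (show l.val = 0 by omega)
    rw [this]; exact h0
  rcases Nat.lt_or_ge l.val n with h2 | h2
  · exfalso; apply hl'
    refine Finset.mem_image.2 ⟨⟨l.val - 1, by omega⟩, Finset.mem_univ _, ?_⟩
    exact Fin.ext (by simp [he]; omega)
  · have : l = (⟨n, by omega⟩ : Fin (n+1)) := Fin.ext (show l.val = n by have := l.isLt; omega)
    rw [this]; exact hl

lemma fact1 {m : ℕ} {k : Matrix (Fin m) (Fin m) ℝ} (hk1 : kᵀ * k = 1)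
    (x : Fin m → ℝ) (b : Fin m) : ∑ a, (k *ᵥ x) a * k a b = x b := by
  have h : kᵀ *ᵥ (k *ᵥ x) = x := by
    rw [Matrix.mulVec_mulVec, hk1, Matrix.one_mulVec]
  calc ∑ a, (k *ᵥ x) a * k a b = (kᵀ *ᵥ (k *ᵥ x)) b := by
        simp [Matrix.mulVec, dotProduct, Matrix.transpose_apply, mul_comm]
    _ = x b := by rw [h]

lemma fact2 {m : ℕ} {k : Matrix (Fin m) (Fin m) ℝ} (hk1 : kᵀ * k = 1)
    (x : Fin m → ℝ) : ∑ l, (k *ᵥ x) l ^ 2 = ∑ l, x l ^ 2 := by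
  calc ∑ l, (k *ᵥ x) l ^ 2 = ∑ l, ∑ b, ((k *ᵥ x) l * k l b) * x b := by
        refine Finset.sum_congr rfl fun l _ => ?_
        rw [pow_two]
        have h2 : ∑ b, ((k *ᵥ x) l * k l b) * x b = (k *ᵥ x) l * ∑ b, k l b * x b := by
          rw [Finset.mul_sum]
          exact Finset.sum_congr rfl fun b _ => by ring
        rw [h2]
        rfl
    _ = ∑ b, (∑ l, (k *ᵥ x) l * k l b) * x b := by
        rw [Finset.sum_comm]
        exact Finset.sum_congr rfl fun b _ => (Finset.sum_mul _ _ _).symm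
    _ = ∑ b, x b ^ 2 := by
        refine Finset.sum_congr rfl fun b _ => ?_
        rw [fact1 hk1, pow_two]


section entries
variable {n : ℕ} (k : Matrix (Fin (n - 1)) (Fin (n - 1)) ℝ)
  (x : Fin (n - 1) → ℝ) (i j : Fin (n + 1))

lemma mMat_row0 (hi : i.val = 0) : mMat n k i j = if j.val = 0 then 1 else 0 := by
  have hib := i.isLt; have hjb := j.isLt
  simp only [mMat, Matrix.of_apply]
  split_ifs <;> first | rfl | omega

lemma mMat_rowN (hi : i.val = n) : mMat n k i j = if j.val = n then 1 else 0 := by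
  have hib := i.isLt; have hjb := j.isLt
  simp only [mMat, Matrix.of_apply]
  split_ifs <;> first | rfl | omega

lemma mMat_rowMid (hi1 : 1 ≤ i.val) (hi2 : i.val ≤ n - 1) :
    mMat n k i j = if h : 1 ≤ j.val ∧ j.val - 1 < n - 1 then
      k ⟨i.val - 1, by omega⟩ ⟨j.val - 1, h.2⟩ else 0 := by
  have hib := i.isLt; have hjb := j.isLt
  simp only [mMat, Matrix.of_apply]
  split_ifs <;> first | rfl | omega

lemma mMat_col0 (hj : j.val = 0) : mMat n k i j = if i.val = 0 then 1 else 0 := by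
  have hib := i.isLt; have hjb := j.isLt
  simp only [mMat, Matrix.of_apply]
  split_ifs <;> first | rfl | omega

lemma mMat_colN (hj : j.val = n) : mMat n k i j = if i.val = n then 1 else 0 := by
  have hib := i.isLt; have hjb := j.isLt
  simp only [mMat, Matrix.of_apply]
  split_ifs <;> first | rfl | omega

lemma mMat_colMid (hj1 : 1 ≤ j.val) (hj2 : j.val ≤ n - 1) :
    mMat n k i j = if h : 1 ≤ i.val ∧ i.val - 1 < n - 1 then
      k ⟨i.val - 1, h.2⟩ ⟨j.val - 1, by omega⟩ else 0 := by
  have hib := i.isLt; have hjb := j.isLt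
  simp only [mMat, Matrix.of_apply]
  split_ifs <;> first | rfl | omega

lemma uMat_row0 (hi : i.val = 0) :
    uMat n x i j = if j.val = 0 then 1 else if j.val = n then ∑ l, x l ^ 2
      else if h : 1 ≤ j.val ∧ j.val - 1 < n - 1 then x ⟨j.val - 1, h.2⟩ else 0 := by
  have hib := i.isLt; have hjb := j.isLt
  simp only [uMat, Matrix.of_apply, Fin.ext_iff]
  split_ifs <;> first | rfl | omega

lemma uMat_rowN (hi : i.val = n) : uMat n x i j = if j.val = n then 1 else 0 := by
  have hib := i.isLt; have hjb := j.isLt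
  simp only [uMat, Matrix.of_apply, Fin.ext_iff]
  split_ifs <;> first | rfl | omega

lemma uMat_rowMid (hi1 : 1 ≤ i.val) (hi2 : i.val ≤ n - 1) :
    uMat n x i j = if j.val = i.val then 1
      else if j.val = n then 2 * x ⟨i.val - 1, by omega⟩ else 0 := by
  have hib := i.isLt; have hjb := j.isLt
  simp only [uMat, Matrix.of_apply, Fin.ext_iff]
  split_ifs <;> first | rfl | omega

lemma uMat_col0 (hj : j.val = 0) : uMat n x i j = if i.val = 0 then 1 else 0 := by
  have hib := i.isLt; have hjb := j.isLt
  simp only [uMat, Matrix.of_apply, Fin.ext_iff]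
  split_ifs <;> first | rfl | omega

lemma uMat_colN (hj : j.val = n) :
    uMat n x i j = if i.val = n then 1 else if i.val = 0 then ∑ l, x l ^ 2
      else if h : 1 ≤ i.val ∧ i.val - 1 < n - 1 then 2 * x ⟨i.val - 1, h.2⟩ else 0 := by
  have hib := i.isLt; have hjb := j.isLt
  simp only [uMat, Matrix.of_apply, Fin.ext_iff]
  split_ifs <;> first | rfl | omega

lemma uMat_colMid (hj1 : 1 ≤ j.val) (hj2 : j.val ≤ n - 1) :
    uMat n x i j = if i.val = j.val then 1
      else if i.val = 0 then x ⟨j.val - 1, by omega⟩ else 0 := by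
  have hib := i.isLt; have hjb := j.isLt
  simp only [uMat, Matrix.of_apply, Fin.ext_iff]
  split_ifs <;> first | rfl | omega

end entries

lemma mMat_mul_transpose {n : ℕ} (hn : 2 ≤ n) {k : Matrix (Fin (n - 1)) (Fin (n - 1)) ℝ}
    (hk2 : k * kᵀ = 1) : mMat n k * mMat n kᵀ = 1 := by
  ext i j
  rw [Matrix.mul_apply]
  have hib := i.isLt; have hjb := j.isLt
  rcases Nat.lt_or_ge i.val 1 with hi0 | hi1
  · have hi : i.val = 0 := by omega
    rw [Fintype.sum_eq_single i (fun l hl => by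
      rw [mMat_row0 k i l hi, if_neg (fun h => hl (Fin.ext (by omega))), zero_mul])]
    rw [mMat_row0 k i i hi, if_pos hi, one_mul, mMat_row0 kᵀ i j hi, Matrix.one_apply]
    by_cases hj : j.val = 0
    · rw [if_pos hj, if_pos (Fin.ext (by omega))]
    · rw [if_neg hj, if_neg (fun h => hj (by rw [← h]; exact hi))]
  rcases Nat.lt_or_ge i.val n with hi2 | hin
  · have hi2' : i.val ≤ n - 1 := by omega
    rcases Nat.lt_or_ge j.val 1 with hj0 | hj1
    · have hj : j.val = 0 := by omega
      rw [Finset.sum_eq_zero (fun l _ => by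
        by_cases hl0 : l.val = 0
        · rw [mMat_rowMid k i l hi1 hi2', dif_neg (by omega), zero_mul]
        · rw [mMat_col0 kᵀ l j hj, if_neg hl0, mul_zero]),
        Matrix.one_apply, if_neg (fun h => by have := congrArg Fin.val h; omega)]
    rcases Nat.lt_or_ge j.val n with hj2 | hjn
    · have hj2' : j.val ≤ n - 1 := by omega
      rw [sum_mid hn _
        (by rw [mMat_rowMid k i _ hi1 hi2',
          dif_neg (fun h => (Nat.not_succ_le_zero 0 h.1).elim), zero_mul])
        (by rw [mMat_rowMid k i _ hi1 hi2',
          dif_neg (fun h => (lt_irrefl (n-1) h.2).elim), zero_mul])]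
      have e : ∀ b : Fin (n-1), mMat n k i ⟨b.val + 1, by omega⟩ *
          mMat n kᵀ ⟨b.val + 1, by omega⟩ j
          = k ⟨i.val - 1, by omega⟩ b * kᵀ b ⟨j.val - 1, by omega⟩ := by
        intro b
        rw [mMat_rowMid k i _ hi1 hi2',
          dif_pos (show 1 ≤ b.val + 1 ∧ b.val + 1 - 1 < n - 1 from ⟨by omega, by omega⟩),
          mMat_colMid kᵀ _ j hj1 hj2',
          dif_pos (show 1 ≤ b.val + 1 ∧ b.val + 1 - 1 < n - 1 from ⟨by omega, by omega⟩)]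
        rfl
      rw [Finset.sum_congr rfl (fun b _ => e b), ← Matrix.mul_apply, hk2,
        Matrix.one_apply, Matrix.one_apply]
      by_cases hij : i = j
      · rw [if_pos hij, if_pos (Fin.ext (show i.val - 1 = j.val - 1 by
          have := congrArg Fin.val hij; omega) :
          (⟨i.val - 1, by omega⟩ : Fin (n-1)) = ⟨j.val - 1, by omega⟩)]
      · rw [if_neg hij, if_neg (fun h => hij (Fin.ext (show i.val = j.val by
          have := congrArg Fin.val h
          have h2 : i.val - 1 = j.val - 1 := this
          omega)))]
    · have hj : j.val = n := by omega
      rw [Finset.sum_eq_zero (fun l _ => by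
        by_cases hln : l.val = n
        · rw [mMat_rowMid k i l hi1 hi2', dif_neg (by omega), zero_mul]
        · rw [mMat_colN kᵀ l j hj, if_neg hln, mul_zero]),
        Matrix.one_apply, if_neg (fun h => by have := congrArg Fin.val h; omega)]
  · have hi : i.val = n := by omega
    rw [Fintype.sum_eq_single i (fun l hl => by
      rw [mMat_rowN k i l hi, if_neg (fun h => hl (Fin.ext (by omega))), zero_mul])]
    rw [mMat_rowN k i i hi, if_pos hi, one_mul, mMat_rowN kᵀ i j hi, Matrix.one_apply]
    by_cases hj : j.val = n
    · rw [if_pos hj, if_pos (Fin.ext (by omega))]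
    · rw [if_neg hj, if_neg (fun h => hj (by rw [← h]; exact hi))]

lemma key_comm {n : ℕ} (hn : 2 ≤ n) {k : Matrix (Fin (n - 1)) (Fin (n - 1)) ℝ}
    (hk1 : kᵀ * k = 1) (x : Fin (n - 1) → ℝ) :
    mMat n k * uMat n x = uMat n (k *ᵥ x) * mMat n k := by
  ext i j
  rw [Matrix.mul_apply, Matrix.mul_apply]
  have hib := i.isLt; have hjb := j.isLt
  rcases Nat.lt_or_ge i.val 1 with hi0 | hi1
  · have hi : i.val = 0 := by omega
    rw [Fintype.sum_eq_single i (fun l hl => by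
      rw [mMat_row0 k i l hi, if_neg (fun h => hl (Fin.ext (by omega))), zero_mul]),
      mMat_row0 k i i hi, if_pos hi, one_mul]
    rcases Nat.lt_or_ge j.val 1 with hj0 | hj1
    · have hj : j.val = 0 := by omega
      rw [Fintype.sum_eq_single i (fun l hl => by
        rw [mMat_col0 k l j hj, if_neg (fun h => hl (Fin.ext (by omega))), mul_zero]),
        mMat_col0 k i j hj, if_pos hi, mul_one,
        uMat_col0 x i j hj, if_pos hi, uMat_col0 (k *ᵥ x) i i hi, if_pos hi]
    rcases Nat.lt_or_ge j.val n with hj2 | hjn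
    · have hj2' : j.val ≤ n - 1 := by omega
      rw [sum_mid hn _
        (by rw [mMat_colMid k _ j hj1 hj2',
          dif_neg (fun h => (Nat.not_succ_le_zero 0 h.1).elim), mul_zero])
        (by rw [mMat_colMid k _ j hj1 hj2',
          dif_neg (fun h => (lt_irrefl (n-1) h.2).elim), mul_zero])]
      have e : ∀ b : Fin (n-1), uMat n (k *ᵥ x) i ⟨b.val + 1, by omega⟩ *
          mMat n k ⟨b.val + 1, by omega⟩ j
          = (k *ᵥ x) b * k b ⟨j.val - 1, by omega⟩ := by
        intro b
        have hbb := b.isLt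
        rw [uMat_row0 (k *ᵥ x) i _ hi,
          if_neg (fun h => Nat.succ_ne_zero b.val h),
          if_neg (show ¬((⟨b.val + 1, by omega⟩ : Fin (n+1)).val = n) from
            fun h => by have h' : b.val + 1 = n := h; omega),
          dif_pos (show 1 ≤ b.val + 1 ∧ b.val + 1 - 1 < n - 1 from ⟨by omega, by omega⟩),
          mMat_colMid k _ j hj1 hj2',
          dif_pos (show 1 ≤ b.val + 1 ∧ b.val + 1 - 1 < n - 1 from ⟨by omega, by omega⟩)]
        rfl
      rw [Finset.sum_congr rfl (fun b _ => e b), fact1 hk1,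
        uMat_row0 x i j hi, if_neg (by omega), if_neg (by omega),
        dif_pos (show 1 ≤ j.val ∧ j.val - 1 < n - 1 from ⟨hj1, by omega⟩)]
    · have hj : j.val = n := by omega
      rw [Fintype.sum_eq_single (⟨n, by omega⟩ : Fin (n+1)) (fun l hl => by
        rw [mMat_colN k l j hj, if_neg (fun h => hl (Fin.ext h)), mul_zero]),
        mMat_colN k _ j hj, if_pos rfl, mul_one,
        uMat_row0 (k *ᵥ x) i _ hi,
        if_neg (show ¬((⟨n, by omega⟩ : Fin (n+1)).val = 0) from
          fun h => by have h' : n = 0 := h; omega),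
        if_pos rfl,
        uMat_row0 x i j hi, if_neg (by omega), if_pos hj, fact2 hk1]
  rcases Nat.lt_or_ge i.val n with hi2 | hin
  · have hi2' : i.val ≤ n - 1 := by omega
    rw [sum_mid hn _
      (by rw [mMat_rowMid k i _ hi1 hi2',
        dif_neg (fun h => (Nat.not_succ_le_zero 0 h.1).elim), zero_mul])
      (by rw [mMat_rowMid k i _ hi1 hi2',
        dif_neg (fun h => (lt_irrefl (n-1) h.2).elim), zero_mul])]
    have eM : ∀ b : Fin (n-1), mMat n k i ⟨b.val + 1, by omega⟩
        = k ⟨i.val - 1, by omega⟩ b := by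
      intro b
      rw [mMat_rowMid k i _ hi1 hi2',
        dif_pos (show 1 ≤ b.val + 1 ∧ b.val + 1 - 1 < n - 1 from ⟨by omega, by omega⟩)]
      rfl
    rcases Nat.lt_or_ge j.val 1 with hj0 | hj1
    · have hj : j.val = 0 := by omega
      rw [Finset.sum_eq_zero (fun b _ => by
        rw [uMat_col0 x _ j hj, if_neg (fun h => Nat.succ_ne_zero b.val h), mul_zero]),
        Fintype.sum_eq_single (⟨0, by omega⟩ : Fin (n+1)) (fun l hl => by
          rw [mMat_col0 k l j hj, if_neg (fun h => hl (Fin.ext h)), mul_zero]),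
        uMat_rowMid (k *ᵥ x) i _ hi1 hi2',
        if_neg (show ¬((⟨0, by omega⟩ : Fin (n+1)).val = i.val) from
          fun h => by have h' : 0 = i.val := h; omega),
        if_neg (show ¬((⟨0, by omega⟩ : Fin (n+1)).val = n) from
          fun h => by have h' : 0 = n := h; omega),
        zero_mul]
    rcases Nat.lt_or_ge j.val n with hj2 | hjn
    · have hj2' : j.val ≤ n - 1 := by omega
      have eL : ∑ b : Fin (n-1), mMat n k i ⟨b.val + 1, by omega⟩ *
          uMat n x ⟨b.val + 1, by omega⟩ j
          = k ⟨i.val - 1, by omega⟩ ⟨j.val - 1, by omega⟩ := by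
        rw [Fintype.sum_eq_single (⟨j.val - 1, by omega⟩ : Fin (n-1)) (fun b hb => by
          rw [uMat_colMid x _ j hj1 hj2',
            if_neg (fun h => hb (Fin.ext (show b.val = j.val - 1 by
              have h' : b.val + 1 = j.val := h; omega))),
            if_neg (fun h => Nat.succ_ne_zero b.val h), mul_zero]),
          eM, uMat_colMid x _ j hj1 hj2',
          if_pos (show j.val - 1 + 1 = j.val by omega), mul_one]
      rw [eL, Fintype.sum_eq_single i (fun l hl => by
        have hlb := l.isLt
        by_cases hln : l.val = n
        · rw [mMat_colMid k l j hj1 hj2', dif_neg (by omega), mul_zero]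
        · rw [uMat_rowMid (k *ᵥ x) i l hi1 hi2',
            if_neg (fun h => hl (Fin.ext h)), if_neg hln, zero_mul]),
        uMat_rowMid (k *ᵥ x) i i hi1 hi2', if_pos rfl, one_mul,
        mMat_colMid k i j hj1 hj2',
        dif_pos (show 1 ≤ i.val ∧ i.val - 1 < n - 1 from ⟨hi1, by omega⟩)]
    · have hj : j.val = n := by omega
      have eL : ∑ b : Fin (n-1), mMat n k i ⟨b.val + 1, by omega⟩ *
          uMat n x ⟨b.val + 1, by omega⟩ j
          = 2 * ∑ b, k ⟨i.val - 1, by omega⟩ b * x b := by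
        rw [Finset.mul_sum]
        refine Finset.sum_congr rfl fun b _ => ?_
        have hbb := b.isLt
        rw [eM, uMat_colN x _ j hj,
          if_neg (show ¬((⟨b.val + 1, by omega⟩ : Fin (n+1)).val = n) from
            fun h => by have h' : b.val + 1 = n := h; omega),
          if_neg (fun h => Nat.succ_ne_zero b.val h),
          dif_pos (show 1 ≤ b.val + 1 ∧ b.val + 1 - 1 < n - 1 from ⟨by omega, by omega⟩)]
        show k ⟨i.val - 1, by omega⟩ b * (2 * x b) = 2 * (k ⟨i.val - 1, by omega⟩ b * x b)
        ring
      rw [eL, Fintype.sum_eq_single (⟨n, by omega⟩ : Fin (n+1)) (fun l hl => by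
        rw [mMat_colN k l j hj, if_neg (fun h => hl (Fin.ext h)), mul_zero]),
        mMat_colN k _ j hj, if_pos rfl, mul_one,
        uMat_rowMid (k *ᵥ x) i _ hi1 hi2',
        if_neg (show ¬((⟨n, by omega⟩ : Fin (n+1)).val = i.val) from
          fun h => by have h' : n = i.val := h; omega),
        if_pos rfl]
      show 2 * ∑ b, k ⟨i.val - 1, by omega⟩ b * x b = 2 * (k *ᵥ x) ⟨i.val - 1, by omega⟩
      rfl
  · have hi : i.val = n := by omega
    rw [Fintype.sum_eq_single i (fun l hl => by
      rw [mMat_rowN k i l hi, if_neg (fun h => hl (Fin.ext (by omega))), zero_mul]),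
      mMat_rowN k i i hi, if_pos hi, one_mul,
      Fintype.sum_eq_single i (fun l hl => by
        rw [uMat_rowN (k *ᵥ x) i l hi, if_neg (fun h => hl (Fin.ext (by omega))), zero_mul]),
      uMat_rowN (k *ᵥ x) i i hi, if_pos hi, one_mul,
      uMat_rowN x i j hi, mMat_rowN k i j hi]

theorem stmt_6 (n : ℕ) (hn : 2 ≤ n) (k : Matrix (Fin (n - 1)) (Fin (n - 1)) ℝ)
    (hk : k ∈ Matrix.orthogonalGroup (Fin (n - 1)) ℝ) (hkdet : k.det = 1)
    (x : Fin (n - 1) → ℝ) :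
    mMat n k * uMat n x * (mMat n k)⁻¹ = uMat n (k *ᵥ x) := by
  have hk2 : k * kᵀ = 1 := by
    have := (Matrix.mem_orthogonalGroup_iff (Fin (n-1)) ℝ).mp hk
    exact this
  have hk1 : kᵀ * k = 1 := by
    have := (Matrix.mem_orthogonalGroup_iff' (Fin (n-1)) ℝ).mp hk
    exact this
  have hMM : mMat n k * mMat n kᵀ = 1 := mMat_mul_transpose hn hk2
  have hdet : IsUnit (mMat n k).det := by
    have : (mMat n k).det * (mMat n kᵀ).det = 1 := by rw [← Matrix.det_mul, hMM, Matrix.det_one]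
    exact IsUnit.of_mul_eq_one _ this
  rw [key_comm hn hk1 x, Matrix.mul_nonsing_inv_cancel_right _ _ hdet]
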